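/- For every δ > 0 there exists C2 > 0 such that P_y( n·C2 < τ < ∞ ) ≤ e^{−δn} for every y ∈ ℤ × ℤ≥0 with y(1) > y(2) and every integer n > 1. -/

import Mathlib

open MeasureTheory ProbabilityTheory Filter

noncomputable section

/-- One step of the walk constrained to the nonnegative quadrant:
`π(x,v) = v` if `x + v ∈ ℤ≥0²`, and `0` otherwise. -/
def stepX (p v : ℤ × ℤ) : ℤ × ℤ :=
  if 0 ≤ (p + v).1 ∧ 0 ≤ (p + v).2 then p + v else p

/-- One step of the walk constrained only on the second coordinate:
`π₁(y,v) = v` if `y + v ∈ ℤ × ℤ≥0`, and `0` otherwise. -/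
def stepY (p v : ℤ × ℤ) : ℤ × ℤ := if 0 ≤ (p + v).2 then p + v else p

/-- Path of the constrained walk `X` driven by the increments `inc`:
`X_0 = x`, `X_{k+1} = X_k + π(X_k, inc_{k+1})`. -/
def pathX (x : ℤ × ℤ) (inc : ℕ → ℤ × ℤ) : ℕ → ℤ × ℤ
  | 0 => x
  | k + 1 => stepX (pathX x inc k) (inc (k + 1))

/-- Path of the walk `Y`, constrained only on the second coordinate, and with
the first coordinate of each increment reversed:
`Y_0 = y`, `Y_{k+1} = Y_k + π₁(Y_k, 𝕀·inc_{k+1})` where `𝕀(v1,v2) = (−v1,v2)`. -/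
def pathY (y : ℤ × ℤ) (inc : ℕ → ℤ × ℤ) : ℕ → ℤ × ℤ
  | 0 => y
  | k + 1 => stepY (pathY y inc k) (-(inc (k + 1)).1, (inc (k + 1)).2)

/-- Hitting time of the set `A` by the path `p`, as an extended natural
number (`⊤` if the set is never hit). -/
def hitTime (A : Set (ℤ × ℤ)) (p : ℕ → ℤ × ℤ) : ℕ∞ :=
  sInf ((fun n : ℕ => (n : ℕ∞)) '' {n : ℕ | p n ∈ A})

/-- `τ_n`: first time the constrained walk `X` started at `x` hits
`{x : x(1) + x(2) = n}`. -/
def tauN (n : ℤ) (x : ℤ × ℤ) (inc : ℕ → ℤ × ℤ) : ℕ∞ :=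
  hitTime {p | p.1 + p.2 = n} (pathX x inc)

/-- `τ_0`: first time the constrained walk `X` started at `x` hits the origin. -/
def tau0 (x : ℤ × ℤ) (inc : ℕ → ℤ × ℤ) : ℕ∞ :=
  hitTime {((0 : ℤ), (0 : ℤ))} (pathX x inc)

/-- `τ`: first time the walk `Y` started at `y` hits `{y : y(1) = y(2)}`. -/
def tauY (y : ℤ × ℤ) (inc : ℕ → ℤ × ℤ) : ℕ∞ :=
  hitTime {p | p.1 = p.2} (pathY y inc)

/-- `I` is an i.i.d. sequence of `ℤ²`-valued random variables with
`P(I_k = (1,0)) = λ1`, `P(I_k = (−1,0)) = μ1`, `P(I_k = (0,1)) = λ2`,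
`P(I_k = (0,−1)) = μ2`. -/
def IncrementsLaw (l1 m1 l2 m2 : ℝ) {Ω : Type} [MeasurableSpace Ω]
    (μ : Measure Ω) (I : ℕ → Ω → ℤ × ℤ) : Prop :=
  (∀ k, Measurable (I k)) ∧
    iIndepFun I μ ∧
    ∀ k, μ (I k ⁻¹' {(1, 0)}) = ENNReal.ofReal l1 ∧
      μ (I k ⁻¹' {(-1, 0)}) = ENNReal.ofReal m1 ∧
      μ (I k ⁻¹' {(0, 1)}) = ENNReal.ofReal l2 ∧
      μ (I k ⁻¹' {(0, -1)}) = ENNReal.ofReal m2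

/-! ### Auxiliary deterministic lemmas -/

def Sset : Set (ℤ × ℤ) := {(1, 0), (-1, 0), (0, 1), (0, -1)}

lemma pathY_snd_nonneg (y : ℤ × ℤ) (inc : ℕ → ℤ × ℤ) (hy : 0 ≤ y.2) :
    ∀ m, 0 ≤ (pathY y inc m).2 := by
  intro m
  induction m with
  | zero => exact hy
  | succ k ih =>
    show 0 ≤ (stepY _ _).2
    unfold stepY
    split <;> simpa [*]

lemma pathY_fst (y : ℤ × ℤ) (inc : ℕ → ℤ × ℤ) (hy : 0 ≤ y.2)
    (hS : ∀ k, inc k ∈ Sset) :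
    ∀ m, (pathY y inc m).1 = y.1 - ∑ k ∈ Finset.range m, (inc (k + 1)).1 := by
  intro m
  induction m with
  | zero => simp [pathY]
  | succ k ih =>
    show (stepY _ _).1 = _
    rw [Finset.sum_range_succ]
    unfold stepY
    split_ifs with h
    · simp only [Prod.fst_add]
      rw [ih]; ring
    · have hp : 0 ≤ (pathY y inc k).2 := pathY_snd_nonneg y inc hy k
      have h2 : (inc (k + 1)).2 < 0 := by
        by_contra hc
        push_neg at hc
        exact h (by simpa using add_nonneg hp hc)
      have : inc (k + 1) = (0, -1) := by
        rcases hS (k + 1) with h' | h' | h' | h'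
        · rw [h'] at h2; norm_num at h2
        · rw [h'] at h2; norm_num at h2
        · rw [h'] at h2; norm_num at h2
        · exact h'
      rw [ih, this]
      simp

lemma pathY_snd_le (y : ℤ × ℤ) (inc : ℕ → ℤ × ℤ) (hy : 0 ≤ y.2)
    (hS : ∀ k, inc k ∈ Sset) :
    ∀ m, ∃ j ≤ m, (pathY y inc m).2 ≤ (if j = 0 then y.2 else 0) +
      (∑ k ∈ Finset.range m, (inc (k + 1)).2 - ∑ k ∈ Finset.range j, (inc (k + 1)).2) := by
  intro m
  induction m with
  | zero => exact ⟨0, le_refl 0, by simp [pathY]⟩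
  | succ k ih =>
    obtain ⟨j, hj, hle⟩ := ih
    show ∃ j ≤ k + 1, (stepY _ _).2 ≤ _
    unfold stepY
    split_ifs with h
    · refine ⟨j, hj.trans (Nat.le_succ k), ?_⟩
      simp only [Prod.snd_add]
      rw [Finset.sum_range_succ]
      have : (pathY y inc k).2 + (inc (k+1)).2 ≤ _ + (inc (k+1)).2 := add_le_add hle le_rfl
      calc (pathY y inc k).2 + (inc (k+1)).2 ≤ _ := this
        _ = (if j = 0 then y.2 else 0) +
            (∑ x ∈ Finset.range k, (inc (x + 1)).2 + (inc (k+1)).2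
              - ∑ x ∈ Finset.range j, (inc (x + 1)).2) := by ring
    · refine ⟨k + 1, le_refl _, ?_⟩
      have hp : 0 ≤ (pathY y inc k).2 := pathY_snd_nonneg y inc hy k
      have h2 : (inc (k + 1)).2 < 0 := by
        by_contra hc
        push_neg at hc
        exact h (by simpa using add_nonneg hp hc)
      have hm1 : (-1 : ℤ) ≤ (inc (k + 1)).2 := by
        rcases hS (k + 1) with h' | h' | h' | h' <;> rw [h'] <;> norm_num
      push_neg at h
      simp only [Prod.snd_add] at h
      have : (pathY y inc k).2 = 0 := by omega
      rw [this]
      simp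

lemma hitTime_hit {A : Set (ℤ × ℤ)} {p : ℕ → ℤ × ℤ} (h : hitTime A p < ⊤) :
    p (hitTime A p).toNat ∈ A := by
  set B := {n : ℕ | p n ∈ A} with hB
  have hne : B.Nonempty := by
    by_contra hc
    rw [Set.not_nonempty_iff_eq_empty] at hc
    have : hitTime A p = ⊤ := by
      unfold hitTime
      rw [← hB, hc]
      simp
    rw [this] at h
    exact absurd h (lt_irrefl _)
  have hmem : sInf B ∈ B := Nat.sInf_mem hne
  have heq : hitTime A p = ((sInf B : ℕ) : ℕ∞) := by
    apply le_antisymm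
    · exact sInf_le ⟨sInf B, hmem, rfl⟩
    · apply le_sInf
      rintro b ⟨n, hn, rfl⟩
      show ((sInf B : ℕ) : ℕ∞) ≤ (n : ℕ∞)
      exact_mod_cast Nat.sInf_le hn
  rw [heq]
  simpa [hB] using hmem

lemma sum_Icc_one {M : Type*} [AddCommMonoid M] (f : ℕ → M) (m : ℕ) :
    ∑ k ∈ Finset.Icc 1 m, f k = ∑ k ∈ Finset.range m, f (k + 1) := by
  induction m with
  | zero => simp
  | succ m ih =>
    rw [Finset.sum_Icc_succ_top (Nat.succ_le_succ (Nat.zero_le m)),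
      Finset.sum_range_succ, ih]

/-! ### Auxiliary probabilistic lemmas -/

lemma key_ineq {a b c x : ℝ} (ha : 0 < a) (hc : 0 ≤ c) (hx : 1 < x)
    (hab : a * x ^ 2 ≤ b) (habc : a + b + c = 1) : a * x + b / x + c < 1 := by
  have hx0 : (0 : ℝ) < x := by linarith
  have h1 : a * x < b := by nlinarith [mul_pos (mul_pos ha hx0) (sub_pos.mpr hx)]
  have h2 : a * x ^ 2 + b < (a + b) * x := by nlinarith
  have h3 : (a * x ^ 2 + b) / x < a + b := by
    rw [div_lt_iff₀ hx0]; linarith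
  have h4 : (a * x ^ 2 + b) / x = a * x + b / x := by
    field_simp
  linarith [h4 ▸ h3]

variable {Ω : Type} [MeasurableSpace Ω]

lemma measure_preimage_Sset (μ : Measure Ω) {l1 m1 l2 m2 : ℝ} (hl1 : 0 ≤ l1) (hm1 : 0 ≤ m1)
    (hl2 : 0 ≤ l2) (hm2 : 0 ≤ m2) (hsum : l1 + l2 + m1 + m2 = 1)
    {Ik : Ω → ℤ × ℤ} (hmeas : Measurable Ik)
    (h1 : μ (Ik ⁻¹' {(1, 0)}) = ENNReal.ofReal l1)
    (h2 : μ (Ik ⁻¹' {(-1, 0)}) = ENNReal.ofReal m1)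
    (h3 : μ (Ik ⁻¹' {(0, 1)}) = ENNReal.ofReal l2)
    (h4 : μ (Ik ⁻¹' {(0, -1)}) = ENNReal.ofReal m2) :
    μ (Ik ⁻¹' Sset) = 1 := by
  have hU : Ik ⁻¹' Sset = Ik ⁻¹' {(1, 0)} ∪ (Ik ⁻¹' {(-1, 0)} ∪
      (Ik ⁻¹' {(0, 1)} ∪ Ik ⁻¹' {(0, -1)})) := by
    ext ω; simp [Sset]
  have hm2' : MeasurableSet (Ik ⁻¹' {((-1 : ℤ), (0 : ℤ))}) :=
    hmeas (measurableSet_singleton _)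
  have hm3' : MeasurableSet (Ik ⁻¹' {((0 : ℤ), (1 : ℤ))}) :=
    hmeas (measurableSet_singleton _)
  have hm4' : MeasurableSet (Ik ⁻¹' {((0 : ℤ), (-1 : ℤ))}) :=
    hmeas (measurableSet_singleton _)
  have d34 : Disjoint (Ik ⁻¹' {((0:ℤ), (1:ℤ))}) (Ik ⁻¹' {((0:ℤ), (-1:ℤ))}) :=
    Disjoint.preimage _ (by simp)
  have d234 : Disjoint (Ik ⁻¹' {((-1:ℤ), (0:ℤ))})
      (Ik ⁻¹' {((0:ℤ), (1:ℤ))} ∪ Ik ⁻¹' {((0:ℤ), (-1:ℤ))}) := by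
    rw [Set.disjoint_union_right]
    exact ⟨Disjoint.preimage _ (by simp), Disjoint.preimage _ (by simp)⟩
  have d1234 : Disjoint (Ik ⁻¹' {((1:ℤ), (0:ℤ))}) (Ik ⁻¹' {((-1:ℤ), (0:ℤ))} ∪
      (Ik ⁻¹' {((0:ℤ), (1:ℤ))} ∪ Ik ⁻¹' {((0:ℤ), (-1:ℤ))})) := by
    rw [Set.disjoint_union_right, Set.disjoint_union_right]
    exact ⟨Disjoint.preimage _ (by simp),
      Disjoint.preimage _ (by simp), Disjoint.preimage _ (by simp)⟩
  rw [hU, measure_union d1234 (hm2'.union (hm3'.union hm4')),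
    measure_union d234 (hm3'.union hm4'), measure_union d34 hm4',
    h1, h2, h3, h4, ← ENNReal.ofReal_add hl2 hm2, ← ENNReal.ofReal_add hm1 (by linarith),
    ← ENNReal.ofReal_add hl1 (by linarith)]
  rw [show l1 + (m1 + (l2 + m2)) = 1 by linarith]
  simp

lemma measure_not_Sset (μ : Measure Ω) [IsProbabilityMeasure μ]
    {l1 m1 l2 m2 : ℝ} (hl1 : 0 ≤ l1) (hm1 : 0 ≤ m1)
    (hl2 : 0 ≤ l2) (hm2 : 0 ≤ m2) (hsum : l1 + l2 + m1 + m2 = 1)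
    {Ik : Ω → ℤ × ℤ} (hmeas : Measurable Ik)
    (h1 : μ (Ik ⁻¹' {(1, 0)}) = ENNReal.ofReal l1)
    (h2 : μ (Ik ⁻¹' {(-1, 0)}) = ENNReal.ofReal m1)
    (h3 : μ (Ik ⁻¹' {(0, 1)}) = ENNReal.ofReal l2)
    (h4 : μ (Ik ⁻¹' {(0, -1)}) = ENNReal.ofReal m2) :
    μ {ω | Ik ω ∉ Sset} = 0 := by
  have hS : MeasurableSet Sset := (Set.to_countable Sset).measurableSet
  have : {ω | Ik ω ∉ Sset} = (Ik ⁻¹' Sset)ᶜ := rfl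
  rw [this, measure_compl (hmeas hS) (measure_ne_top μ _),
    measure_preimage_Sset μ hl1 hm1 hl2 hm2 hsum hmeas h1 h2 h3 h4]
  simp

lemma mgf_comp_eq (μ : Measure Ω) [IsProbabilityMeasure μ]
    {l1 m1 l2 m2 : ℝ} (hl1 : 0 ≤ l1) (hm1 : 0 ≤ m1)
    (hl2 : 0 ≤ l2) (hm2 : 0 ≤ m2) (hsum : l1 + l2 + m1 + m2 = 1)
    {Ik : Ω → ℤ × ℤ} (hmeas : Measurable Ik)
    (h1 : μ (Ik ⁻¹' {(1, 0)}) = ENNReal.ofReal l1)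
    (h2 : μ (Ik ⁻¹' {(-1, 0)}) = ENNReal.ofReal m1)
    (h3 : μ (Ik ⁻¹' {(0, 1)}) = ENNReal.ofReal l2)
    (h4 : μ (Ik ⁻¹' {(0, -1)}) = ENNReal.ofReal m2)
    (ψ : ℤ × ℤ → ℝ) (θ : ℝ) :
    mgf (fun ω => ψ (Ik ω)) μ θ =
      l1 * Real.exp (θ * ψ (1, 0)) + m1 * Real.exp (θ * ψ (-1, 0)) +
        l2 * Real.exp (θ * ψ (0, 1)) + m2 * Real.exp (θ * ψ (0, -1)) := by
  have hae : ∀ᵐ ω ∂μ, Ik ω ∈ Sset := by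
    rw [ae_iff]
    exact measure_not_Sset μ hl1 hm1 hl2 hm2 hsum hmeas h1 h2 h3 h4
  classical
  have hsing : ∀ v : ℤ × ℤ, MeasurableSet (Ik ⁻¹' {v}) :=
    fun v => hmeas (measurableSet_singleton _)
  set V : Finset (ℤ × ℤ) := {(1, 0), (-1, 0), (0, 1), (0, -1)} with hV
  have heq : (fun ω => Real.exp (θ * ψ (Ik ω))) =ᵐ[μ] fun ω =>
      ∑ v ∈ V, (Ik ⁻¹' {v}).indicator (fun _ => Real.exp (θ * ψ v)) ω := by
    filter_upwards [hae] with ω hω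
    have key : ∀ v0 ∈ V, Ik ω = v0 →
        (∑ v ∈ V, (Ik ⁻¹' {v}).indicator (fun _ => Real.exp (θ * ψ v)) ω)
          = Real.exp (θ * ψ (Ik ω)) := by
      intro v0 hv0 hv
      rw [Finset.sum_eq_single v0]
      · simp [Set.indicator_apply, hv]
      · intro b hb hbne
        simp only [Set.indicator_apply, Set.mem_preimage, Set.mem_singleton_iff, hv]
        rw [if_neg (by exact fun hc => hbne (hc ▸ rfl))]
      · intro hnot; exact absurd hv0 hnot
    rcases hω with h | h | h | h
    · exact (key _ (by decide) h).symm
    · exact (key _ (by decide) h).symm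
    · exact (key _ (by decide) h).symm
    · exact (key _ (by decide) h).symm
  have hexp : ∀ v : ℤ × ℤ, (∫ a, (Ik ⁻¹' {v}).indicator (fun _ => Real.exp (θ * ψ v)) a ∂μ)
      = (μ (Ik ⁻¹' {v})).toReal * Real.exp (θ * ψ v) := fun v => by
    rw [integral_indicator_const _ (hsing v), smul_eq_mul]
    rfl
  rw [mgf, integral_congr_ae heq,
    integral_finset_sum _ (fun v _ => (integrable_const _).indicator (hsing v)),
    Finset.sum_congr rfl fun v _ => hexp v, hV,
    Finset.sum_insert (by decide), Finset.sum_insert (by decide),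
    Finset.sum_insert (by decide), Finset.sum_singleton,
    h1, h2, h3, h4, ENNReal.toReal_ofReal hl1, ENNReal.toReal_ofReal hm1,
    ENNReal.toReal_ofReal hl2, ENNReal.toReal_ofReal hm2]
  ring

set_option maxHeartbeats 2000000 in
theorem stmt7 {Ω : Type} [MeasurableSpace Ω] (μ : Measure Ω) [IsProbabilityMeasure μ]
    (l1 m1 l2 m2 : ℝ)
    (hl1 : 0 < l1) (hm1 : 0 < m1) (hl2 : 0 < l2) (hm2 : 0 < m2)
    (hsum : l1 + l2 + m1 + m2 = 1)
    (hρ1 : l1 / m1 < 1) (hρ2 : l2 / m2 < 1)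
    (hord1 : l2 / m2 ≤ (l1 + l2) / (m1 + m2))
    (hord2 : (l1 + l2) / (m1 + m2) ≤ l1 / m1)
    (hneq : l1 / m1 ≠ l2 / m2)
    (hr2 : ((l1 + l2) / (m1 + m2)) ^ 2 < l2 / m2)
    (I : ℕ → Ω → ℤ × ℤ) (hI : IncrementsLaw l1 m1 l2 m2 μ I)
    (δ : ℝ) (hδ : 0 < δ) :
    ∃ C2 : ℝ, 0 < C2 ∧ ∀ y : ℤ × ℤ, 0 ≤ y.2 → y.2 < y.1 → ∀ n : ℕ, 1 < n →
      μ {ω | tauY y (fun k => I k ω) < ⊤ ∧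
          (n : ℝ) * C2 < ((tauY y (fun k => I k ω)).toNat : ℝ)} ≤
        ENNReal.ofReal (Real.exp (-δ * n)) := by
  classical
  obtain ⟨hImeas, hIndep, hlaw⟩ := hI
  have hlm1 : l1 < m1 := (div_lt_one hm1).mp hρ1
  have hlm2 : l2 < m2 := (div_lt_one hm2).mp hρ2
  -- the tilting parameter
  set x1 := Real.sqrt (m1 / l1) with hx1def
  set x2 := Real.sqrt ((m1 + m2) / (l1 + l2)) with hx2def
  set x0 := min x1 x2 with hx0def
  have hd1 : 1 < m1 / l1 := (one_lt_div hl1).mpr hlm1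
  have hd2 : 1 < (m1 + m2) / (l1 + l2) := (one_lt_div (by linarith)).mpr (by linarith)
  have hs1 : x1 ^ 2 = m1 / l1 := Real.sq_sqrt (le_of_lt (lt_trans one_pos hd1))
  have hs2 : x2 ^ 2 = (m1 + m2) / (l1 + l2) := Real.sq_sqrt (le_of_lt (lt_trans one_pos hd2))
  have hx1gt : 1 < x1 := by
    by_contra hcon
    push_neg at hcon
    have h := pow_le_one₀ (Real.sqrt_nonneg (m1 / l1)) hcon (n := 2)
    rw [hs1] at h
    linarith
  have hx2gt : 1 < x2 := by
    by_contra hcon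
    push_neg at hcon
    have h := pow_le_one₀ (Real.sqrt_nonneg ((m1 + m2) / (l1 + l2))) hcon (n := 2)
    rw [hs2] at h
    linarith
  have hx0gt : 1 < x0 := lt_min hx1gt hx2gt
  have hx0pos : 0 < x0 := lt_trans one_pos hx0gt
  have hx0sq1 : l1 * x0 ^ 2 ≤ m1 := by
    have h1 : x0 ^ 2 ≤ m1 / l1 := by
      rw [← hs1]
      exact pow_le_pow_left₀ hx0pos.le (min_le_left x1 x2) 2
    calc l1 * x0 ^ 2 ≤ l1 * (m1 / l1) := mul_le_mul_of_nonneg_left h1 hl1.le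
      _ = m1 := by field_simp
  have hx0sq2 : (l1 + l2) * x0 ^ 2 ≤ m1 + m2 := by
    have h1 : x0 ^ 2 ≤ (m1 + m2) / (l1 + l2) := by
      rw [← hs2]
      exact pow_le_pow_left₀ hx0pos.le (min_le_right x1 x2) 2
    have hl12 : (0:ℝ) < l1 + l2 := by linarith
    calc (l1 + l2) * x0 ^ 2 ≤ (l1 + l2) * ((m1 + m2) / (l1 + l2)) := by
          exact mul_le_mul_of_nonneg_left h1 hl12.le
      _ = m1 + m2 := by field_simp
  set qf := l1 * x0 + m1 / x0 + (l2 + m2) with hqfdef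
  set qg := (l1 + l2) * x0 + (m1 + m2) / x0 with hqgdef
  have hqf1 : qf < 1 := key_ineq hl1 (by linarith) hx0gt hx0sq1 (by linarith)
  have hqg1 : qg < 1 := by
    have h := key_ineq (a := l1 + l2) (b := m1 + m2) (c := 0) (by linarith) le_rfl
      hx0gt hx0sq2 (by linarith)
    rw [hqgdef]; linarith
  set q := max qf qg with hqdef
  have hq1 : q < 1 := max_lt hqf1 hqg1
  have hq0 : 0 < q := by
    have h0 : 0 < qf := by
      rw [hqfdef]
      have ha := mul_pos hl1 hx0pos
      have hb := div_pos hm1 hx0pos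
      linarith
    exact lt_of_lt_of_le h0 (le_max_left _ _)
  set r0 := Real.sqrt q with hr0def
  have hr0pos : 0 < r0 := Real.sqrt_pos.mpr hq0
  have hr0sq : r0 ^ 2 = q := Real.sq_sqrt hq0.le
  have hr01 : r0 < 1 := by
    rw [hr0def, ← Real.sqrt_one]
    exact Real.sqrt_lt_sqrt hq0.le hq1
  have h1r0 : 0 < 1 - r0 := by linarith
  set θ := Real.log x0 with hθdef
  have hθpos : 0 < θ := Real.log_pos hx0gt
  have hexpθ : Real.exp θ = x0 := Real.exp_log hx0pos
  -- the constants
  set B := ((1 - r0)⁻¹) ^ 2 with hBdef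
  have hBpos : 0 < B := by positivity
  have hB1 : 0 ≤ Real.log B := by
    apply Real.log_nonneg
    rw [hBdef]
    have hinv : (1 - r0) * (1 - r0)⁻¹ = 1 := mul_inv_cancel₀ h1r0.ne'
    have hinvpos : 0 < (1 - r0)⁻¹ := inv_pos.mpr h1r0
    have h1 : 1 ≤ (1 - r0)⁻¹ := by
      have h2 : (1 - r0) * (1 - r0)⁻¹ ≤ 1 * (1 - r0)⁻¹ :=
        mul_le_mul_of_nonneg_right (by linarith) hinvpos.le
      linarith
    have h3 : 1 * 1 ≤ (1 - r0)⁻¹ * (1 - r0)⁻¹ :=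
      mul_le_mul h1 h1 zero_le_one hinvpos.le
    rw [pow_two]
    linarith
  set α := -Real.log r0 with hαdef
  have hαpos : 0 < α := by
    have := Real.log_neg hr0pos hr01
    rw [hαdef]; linarith
  set C2 := (δ + Real.log B + 1) / α with hC2def
  have hC2pos : 0 < C2 := by
    apply div_pos (by linarith) hαpos
  refine ⟨C2, hC2pos, ?_⟩
  intro y hy2 hy12 n hn
  -- the random variables
  set φ : ℕ → ℕ → ℤ × ℤ → ℝ := fun j k v =>
    if v = (1, 0) then 1 else if v = (-1, 0) then -1
    else if v = (0, 1) then (if j < k then 1 else 0)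
    else if v = (0, -1) then (if j < k then -1 else 0) else 0 with hφdef
  have hφbd : ∀ j k v, |φ j k v| ≤ 1 := by
    intro j k v
    rw [hφdef]; dsimp only; split_ifs <;> norm_num
  set X : ℕ → ℕ → Ω → ℝ := fun j k ω => φ j k (I k ω) with hXdef
  have hXmeas : ∀ j k, Measurable (X j k) :=
    fun j k => (measurable_of_countable (φ j k)).comp (hImeas k)
  have hXindep : ∀ j, iIndepFun (X j) μ :=
    fun j => hIndep.comp (fun k => φ j k) (fun k => measurable_of_countable _)
  have hXint : ∀ j k, Integrable (fun ω => Real.exp (θ * X j k ω)) μ := by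
    intro j k
    refine (integrable_const (Real.exp θ)).mono'
      (((hXmeas j k).const_mul θ).exp).aestronglyMeasurable ?_
    filter_upwards with ω
    rw [Real.norm_eq_abs, abs_of_pos (Real.exp_pos _)]
    apply Real.exp_le_exp.mpr
    have hb := abs_le.mp (hφbd j k (I k ω))
    have hX1 : X j k ω ≤ 1 := hb.2
    have := mul_le_mul_of_nonneg_left hX1 hθpos.le
    linarith
  -- the mgf bound
  have hmgf : ∀ j k, mgf (X j k) μ θ ≤ q := by
    intro j k
    obtain ⟨hk1, hk2, hk3, hk4⟩ := hlaw k
    have hc := mgf_comp_eq μ hl1.le hm1.le hl2.le hm2.le hsum (hImeas k)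
      hk1 hk2 hk3 hk4 (φ j k) θ
    have hXeq : X j k = fun ω => φ j k (I k ω) := rfl
    rw [hXeq, hc]
    have hv1 : φ j k ((1:ℤ), (0:ℤ)) = 1 := by norm_num [hφdef]
    have hv2 : φ j k ((-1:ℤ), (0:ℤ)) = -1 := by norm_num [hφdef]
    have hv3 : φ j k ((0:ℤ), (1:ℤ)) = if j < k then 1 else 0 := by norm_num [hφdef]
    have hv4 : φ j k ((0:ℤ), (-1:ℤ)) = if j < k then -1 else 0 := by norm_num [hφdef]
    have hexpneg : Real.exp (θ * (-1)) = x0⁻¹ := by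
      rw [mul_neg_one, Real.exp_neg, hexpθ]
    by_cases hjk : j < k
    · rw [hv1, hv2, hv3, hv4, if_pos hjk, if_pos hjk, mul_one, hexpθ, hexpneg]
      have : l1 * x0 + m1 * x0⁻¹ + l2 * x0 + m2 * x0⁻¹ = qg := by
        rw [hqgdef]; field_simp; ring
      rw [this]
      exact le_max_right _ _
    · rw [hv1, hv2, hv3, hv4, if_neg hjk, if_neg hjk, mul_one, hexpθ, hexpneg,
        mul_zero, Real.exp_zero, mul_one, mul_one]
      have : l1 * x0 + m1 * x0⁻¹ + l2 + m2 = qf := by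
        rw [hqfdef]; field_simp; ring
      rw [this]
      exact le_max_left _ _
  -- Chernoff bound for each pair (m, j)
  set E : ℕ → ℕ → Set Ω := fun m j => {ω | (1:ℝ) ≤ (∑ k ∈ Finset.Icc 1 m, X j k) ω} with hEdef
  have hchern : ∀ m j, μ (E m j) ≤ ENNReal.ofReal (q ^ m) := by
    intro m j
    have hint : Integrable (fun ω => Real.exp (θ * (∑ k ∈ Finset.Icc 1 m, X j k) ω)) μ :=
      iIndepFun.integrable_exp_mul_sum (hXindep j) (hXmeas j) (fun i _ => hXint j i)
    have h1 := measure_ge_le_exp_mul_mgf (μ := μ) (X := ∑ k ∈ Finset.Icc 1 m, X j k)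
      (t := θ) 1 hθpos.le hint
    have h2 : mgf (∑ k ∈ Finset.Icc 1 m, X j k) μ θ
        = ∏ k ∈ Finset.Icc 1 m, mgf (X j k) μ θ :=
      iIndepFun.mgf_sum (hXindep j) (hXmeas j) _
    have h3 : ∏ k ∈ Finset.Icc 1 m, mgf (X j k) μ θ ≤ q ^ m := by
      calc ∏ k ∈ Finset.Icc 1 m, mgf (X j k) μ θ ≤ ∏ k ∈ Finset.Icc 1 m, q :=
            Finset.prod_le_prod (fun i _ => mgf_nonneg) (fun i _ => hmgf j i)
        _ = q ^ m := by rw [Finset.prod_const, Nat.card_Icc]; norm_num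
    have h4 : (μ (E m j)).toReal ≤ q ^ m := by
      calc (μ (E m j)).toReal
          ≤ Real.exp (-θ * 1) * mgf (∑ k ∈ Finset.Icc 1 m, X j k) μ θ := h1
        _ ≤ 1 * (q ^ m) := by
            apply mul_le_mul _ (h2 ▸ h3) mgf_nonneg zero_le_one
            rw [Real.exp_le_one_iff]; linarith
        _ = q ^ m := one_mul _
    exact (ENNReal.le_ofReal_iff_toReal_le (measure_ne_top μ _) (pow_nonneg hq0.le m)).mpr h4
  -- the good set
  set Good := {ω : Ω | ∀ k, I k ω ∈ Sset} with hGoodDef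
  have hGoodc : μ Goodᶜ = 0 := by
    have hsub : Goodᶜ ⊆ ⋃ k, {ω | I k ω ∉ Sset} := by
      intro ω hω
      simp only [hGoodDef, Set.mem_compl_iff, Set.mem_setOf_eq, not_forall] at hω
      obtain ⟨k, hk⟩ := hω
      exact Set.mem_iUnion.mpr ⟨k, hk⟩
    refine measure_mono_null hsub (measure_iUnion_null fun k => ?_)
    obtain ⟨hk1, hk2, hk3, hk4⟩ := hlaw k
    exact measure_not_Sset μ hl1.le hm1.le hl2.le hm2.le hsum (hImeas k) hk1 hk2 hk3 hk4
  -- threshold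
  set M := Nat.floor ((n:ℝ) * C2) + 1 with hMdef
  set F : ℕ → Set Ω := fun m =>
    if (n:ℝ) * C2 < (m:ℝ) then ⋃ j ∈ Finset.range (m+1), E m j else ∅ with hFdef
  -- the inclusion
  have hincl : {ω | tauY y (fun k => I k ω) < ⊤ ∧
      (n : ℝ) * C2 < ((tauY y (fun k => I k ω)).toNat : ℝ)} ∩ Good ⊆ ⋃ m, F m := by
    rintro ω ⟨⟨hτfin, hτbig⟩, hGood⟩
    have hGood' : ∀ k, I k ω ∈ Sset := hGood
    set inc : ℕ → ℤ × ℤ := fun k => I k ω with hincdef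
    set m := (tauY y inc).toNat with hmdef
    have hhit : (pathY y inc m).1 = (pathY y inc m).2 :=
      hitTime_hit (A := {p : ℤ × ℤ | p.1 = p.2}) (p := pathY y inc) hτfin
    obtain ⟨j, hjm, hjle⟩ := pathY_snd_le y inc hy2 hGood' m
    have hfst := pathY_fst y inc hy2 hGood' m
    have e : y.1 - ∑ k ∈ Finset.range m, (inc (k+1)).1 = (pathY y inc m).2 := by
      rw [← hfst]; exact hhit
    have hZ : (1:ℤ) ≤ ∑ k ∈ Finset.range m, (inc (k+1)).1 +
        (∑ k ∈ Finset.range m, (inc (k+1)).2 - ∑ k ∈ Finset.range j, (inc (k+1)).2) := by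
      rw [← e] at hjle
      by_cases hj0 : j = 0
      · subst hj0
        rw [if_pos rfl] at hjle
        simp only [Finset.range_zero, Finset.sum_empty, sub_zero] at hjle ⊢
        linarith
      · rw [if_neg hj0] at hjle
        have hy1 : (1:ℤ) ≤ y.1 := by omega
        linarith
    have hsum_eq : (∑ k ∈ Finset.Icc 1 m, X j k) ω =
        ((∑ k ∈ Finset.range m, (inc (k+1)).1 +
          (∑ k ∈ Finset.range m, (inc (k+1)).2
            - ∑ k ∈ Finset.range j, (inc (k+1)).2) : ℤ) : ℝ) := by
      have e1 : (∑ k ∈ Finset.Icc 1 m, X j k) ω = ∑ k ∈ Finset.Icc 1 m, φ j k (inc k) := by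
        rw [Finset.sum_apply]
      have e2 : ∀ k : ℕ, φ j (k+1) (inc (k+1)) =
          (((inc (k+1)).1 : ℝ) + (if j < k + 1 then ((inc (k+1)).2 : ℝ) else 0)) := by
        intro k
        rcases hGood' (k+1) with h | h | h | h
        · rw [show inc (k+1) = ((1:ℤ), (0:ℤ)) from h]
          norm_num [hφdef]
        · rw [show inc (k+1) = ((-1:ℤ), (0:ℤ)) from h]
          norm_num [hφdef]
        · rw [show inc (k+1) = ((0:ℤ), (1:ℤ)) from h]
          norm_num [hφdef]
        · rw [show inc (k+1) = ((0:ℤ), (-1:ℤ)) from h]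
          norm_num [hφdef]
      rw [e1, sum_Icc_one (fun k => φ j k (inc k)) m]
      rw [Finset.sum_congr rfl (fun k _ => e2 k), Finset.sum_add_distrib]
      have e3 : ∑ k ∈ Finset.range m, (if j < k + 1 then ((inc (k+1)).2 : ℝ) else 0)
          = ∑ k ∈ Finset.range m, (inc (k+1)).2
            - (∑ k ∈ Finset.range j, ((inc (k+1)).2 : ℝ)) := by
        have e4 : ∑ k ∈ Finset.range m, (if j < k + 1 then ((inc (k+1)).2 : ℝ) else 0)
            = ∑ k ∈ Finset.Ico j m, ((inc (k+1)).2 : ℝ) := by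
          rw [← Finset.sum_filter]
          congr 1
          ext k
          simp only [Finset.mem_filter, Finset.mem_range, Finset.mem_Ico, Nat.lt_succ_iff]
          tauto
        rw [e4, Finset.sum_Ico_eq_sub _ hjm]
        push_cast
        ring
      rw [e3]
      push_cast
      ring
    have hEmem : ω ∈ E m j := by
      rw [hEdef]
      show (1:ℝ) ≤ _
      rw [hsum_eq]
      exact_mod_cast hZ
    refine Set.mem_iUnion.mpr ⟨m, ?_⟩
    rw [hFdef]
    dsimp only
    rw [if_pos hτbig]
    exact Set.mem_biUnion (Finset.mem_range.mpr (Nat.lt_succ_of_le hjm)) hEmem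
  -- geometric series facts
  have hgeom : ∀ m : ℕ, ((m:ℝ) + 1) * r0 ^ m ≤ (1 - r0)⁻¹ := by
    intro m
    have h1 : ((m:ℝ) + 1) * r0 ^ m = ∑ _i ∈ Finset.range (m+1), r0 ^ m := by
      rw [Finset.sum_const, Finset.card_range]
      push_cast; ring
    have h2 : ∑ _i ∈ Finset.range (m+1), r0 ^ m ≤ ∑ i ∈ Finset.range (m+1), r0 ^ i :=
      Finset.sum_le_sum fun i hi =>
        pow_le_pow_of_le_one hr0pos.le hr01.le (Nat.lt_succ_iff.mp (Finset.mem_range.mp hi))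
    have h3 : ∑ i ∈ Finset.range (m+1), r0 ^ i ≤ (1 - r0)⁻¹ := by
      have hs : Summable (fun i : ℕ => r0 ^ i) := summable_geometric_of_lt_one hr0pos.le hr01
      calc ∑ i ∈ Finset.range (m+1), r0 ^ i ≤ ∑' i : ℕ, r0 ^ i :=
            hs.sum_le_tsum _ (fun i _ => pow_nonneg hr0pos.le i)
        _ = (1 - r0)⁻¹ := tsum_geometric_of_lt_one hr0pos.le hr01
    linarith
  -- the summable bounding sequence
  set c : ℕ → ℝ := fun m => if M ≤ m then (1 - r0)⁻¹ * r0 ^ m else 0 with hcdef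
  have hc_nonneg : ∀ m, 0 ≤ c m := by
    intro m
    rw [hcdef]
    dsimp only
    split_ifs
    · positivity
    · exact le_refl 0
  have hFm : ∀ m, μ (F m) ≤ ENNReal.ofReal (c m) := by
    intro m
    rw [hFdef, hcdef]
    dsimp only
    by_cases hcond : (n:ℝ) * C2 < (m:ℝ)
    · have hMm : M ≤ m := by
        rw [hMdef]
        have := (Nat.floor_lt (by positivity : (0:ℝ) ≤ (n:ℝ) * C2)).mpr hcond
        omega
      rw [if_pos hcond, if_pos hMm]
      calc μ (⋃ j ∈ Finset.range (m+1), E m j)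
          ≤ ∑ j ∈ Finset.range (m+1), μ (E m j) := measure_biUnion_finset_le _ _
        _ ≤ ∑ _j ∈ Finset.range (m+1), ENNReal.ofReal (q ^ m) :=
            Finset.sum_le_sum fun j _ => hchern m j
        _ = ((m+1 : ℕ) : ENNReal) * ENNReal.ofReal (q ^ m) := by
            rw [Finset.sum_const, Finset.card_range, nsmul_eq_mul]
        _ = ENNReal.ofReal (((m:ℝ) + 1) * q ^ m) := by
            rw [← ENNReal.ofReal_natCast (m+1), ← ENNReal.ofReal_mul (by positivity)]
            congr 1
            push_cast
            ring
        _ ≤ ENNReal.ofReal ((1 - r0)⁻¹ * r0 ^ m) := by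
            apply ENNReal.ofReal_le_ofReal
            have hqm : q ^ m = r0 ^ m * r0 ^ m := by
              rw [← hr0sq, ← pow_mul, two_mul, pow_add]
            rw [hqm]
            calc ((m:ℝ) + 1) * (r0 ^ m * r0 ^ m)
                = (((m:ℝ) + 1) * r0 ^ m) * r0 ^ m := by ring
              _ ≤ (1 - r0)⁻¹ * r0 ^ m :=
                  mul_le_mul_of_nonneg_right (hgeom m) (pow_nonneg hr0pos.le m)
    · rw [if_neg hcond]
      simp
  -- summing the bounds
  have hcg : HasSum (fun i : ℕ => (1 - r0)⁻¹ * (r0 ^ M * r0 ^ i))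
      ((1 - r0)⁻¹ * (r0 ^ M * (1 - r0)⁻¹)) :=
    ((hasSum_geometric_of_lt_one hr0pos.le hr01).mul_left _).mul_left _
  have hinj : Function.Injective (fun i : ℕ => M + i) := fun a b h => by
    simpa using h
  have hvan : ∀ x ∉ Set.range (fun i : ℕ => M + i), c x = 0 := by
    intro x hx
    rw [hcdef]
    dsimp only
    rw [if_neg]
    intro hMx
    refine hx ⟨x - M, ?_⟩
    show M + (x - M) = x
    omega
  have hcs : HasSum c ((1 - r0)⁻¹ * (r0 ^ M * (1 - r0)⁻¹)) := by
    refine (Function.Injective.hasSum_iff hinj hvan).mp ?_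
    have hfun : (c ∘ fun i : ℕ => M + i) = fun i => (1 - r0)⁻¹ * (r0 ^ M * r0 ^ i) := by
      funext i
      simp only [Function.comp_apply, hcdef]
      rw [if_pos (Nat.le_add_right M i), pow_add]
    rw [hfun]
    exact hcg
  have htail : (1 - r0)⁻¹ * (r0 ^ M * (1 - r0)⁻¹) ≤ Real.exp (-δ * n) := by
    have hMge : (n:ℝ) * C2 ≤ (M:ℝ) := by
      rw [hMdef]
      push_cast
      linarith [Nat.lt_floor_add_one ((n:ℝ) * C2)]
    have hC2a : C2 * α = δ + Real.log B + 1 := div_mul_cancel₀ _ hαpos.ne'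
    have hn1 : (1:ℝ) ≤ (n:ℝ) := by exact_mod_cast hn.le
    have hMa : δ * n + Real.log B ≤ (M:ℝ) * α := by
      have h1 : (n:ℝ) * C2 * α ≤ (M:ℝ) * α := mul_le_mul_of_nonneg_right hMge hαpos.le
      have h2 : (n:ℝ) * C2 * α = (n:ℝ) * (δ + Real.log B + 1) := by
        rw [mul_assoc, hC2a]
      have h2' : (n:ℝ) * (δ + Real.log B + 1)
          = (n:ℝ) * δ + (n:ℝ) * Real.log B + (n:ℝ) := by ring
      have h3 : (1:ℝ) * Real.log B ≤ (n:ℝ) * Real.log B :=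
        mul_le_mul_of_nonneg_right hn1 hB1
      have h4 : δ * (n:ℝ) = (n:ℝ) * δ := by ring
      linarith
    have hr0M : r0 ^ M = Real.exp (-((M:ℝ) * α)) := by
      rw [hαdef, show -((M:ℝ) * -Real.log r0) = (M:ℝ) * Real.log r0 by ring,
        Real.exp_nat_mul, Real.exp_log hr0pos]
    have hBexp : (1 - r0)⁻¹ * (1 - r0)⁻¹ = Real.exp (Real.log B) := by
      rw [Real.exp_log hBpos, hBdef]; ring
    calc (1 - r0)⁻¹ * (r0 ^ M * (1 - r0)⁻¹)
        = r0 ^ M * ((1 - r0)⁻¹ * (1 - r0)⁻¹) := by ring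
      _ = Real.exp (-((M:ℝ) * α)) * Real.exp (Real.log B) := by rw [hr0M, hBexp]
      _ = Real.exp (-((M:ℝ) * α) + Real.log B) := (Real.exp_add _ _).symm
      _ ≤ Real.exp (-δ * n) := by
          apply Real.exp_le_exp.mpr
          linarith
  -- conclusion
  calc μ {ω | tauY y (fun k => I k ω) < ⊤ ∧
        (n : ℝ) * C2 < ((tauY y (fun k => I k ω)).toNat : ℝ)}
      ≤ μ (({ω | tauY y (fun k => I k ω) < ⊤ ∧
          (n : ℝ) * C2 < ((tauY y (fun k => I k ω)).toNat : ℝ)} ∩ Good) ∪ Goodᶜ) := by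
        apply measure_mono
        intro ω hω
        by_cases hg : ω ∈ Good
        · exact Or.inl ⟨hω, hg⟩
        · exact Or.inr hg
    _ ≤ μ ({ω | tauY y (fun k => I k ω) < ⊤ ∧
          (n : ℝ) * C2 < ((tauY y (fun k => I k ω)).toNat : ℝ)} ∩ Good) + μ Goodᶜ :=
        measure_union_le _ _
    _ = μ ({ω | tauY y (fun k => I k ω) < ⊤ ∧
          (n : ℝ) * C2 < ((tauY y (fun k => I k ω)).toNat : ℝ)} ∩ Good) := by
        rw [hGoodc, add_zero]
    _ ≤ μ (⋃ m, F m) := measure_mono hincl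
    _ ≤ ∑' m, μ (F m) := measure_iUnion_le _
    _ ≤ ∑' m, ENNReal.ofReal (c m) := ENNReal.tsum_le_tsum hFm
    _ = ENNReal.ofReal (∑' m, c m) :=
        (ENNReal.ofReal_tsum_of_nonneg hc_nonneg hcs.summable).symm
    _ = ENNReal.ofReal ((1 - r0)⁻¹ * (r0 ^ M * (1 - r0)⁻¹)) := by rw [hcs.tsum_eq]
    _ ≤ ENNReal.ofReal (Real.exp (-δ * n)) := ENNReal.ofReal_le_ofReal htail
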